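/- arXiv:1604.07656 — 16 statements merged into one kernel-verified Lean document; each statement's English description precedes it below -/
import Mathlib

section
/- A proper submodule N of an R-module M is (k,n)-closed if and only if for every r ∈ R and every submodule L of M with r^k • L ⊆ N, either r^(n-1) • L ⊆ N or r^n ∈ (N :ᵣ M). -/
/-- A proper submodule N of an R-module M is (k,n)-closed iff for every
r ∈ R and every submodule L of M with r^k • L ⊆ N, either r^(n-1) • L ⊆ N or
r^n ∈ (N :ᵣ M). -/
theorem stmt_0 {R M : Type*} [CommRing R] [Nontrivial R] [AddCommGroup M] [Module R M]
    (k n : ℕ) (hk : 0 < k) (hn : 0 < n) (N : Submodule R M) (hN : N ≠ ⊤) :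
    (∀ (r : R) (m : M), r ^ k • m ∈ N →
        (∀ x : M, r ^ n • x ∈ N) ∨ r ^ (n - 1) • m ∈ N) ↔
    (∀ (r : R) (L : Submodule R M), (∀ x ∈ L, r ^ k • x ∈ N) →
        (∀ x ∈ L, r ^ (n - 1) • x ∈ N) ∨ (∀ x : M, r ^ n • x ∈ N)) := by
  constructor
  · intro h r L hL
    by_cases hall : ∀ x ∈ L, r ^ (n - 1) • x ∈ N
    · exact Or.inl hall
    · push_neg at hall
      obtain ⟨x, hxL, hx⟩ := hall
      rcases h r x (hL x hxL) with h1 | h2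
      · exact Or.inr h1
      · exact absurd h2 hx
  · intro h r m hm
    have hspan : ∀ x ∈ Submodule.span R {m}, r ^ k • x ∈ N := by
      intro x hx
      rw [Submodule.mem_span_singleton] at hx
      obtain ⟨c, rfl⟩ := hx
      rw [smul_comm]
      exact N.smul_mem c hm
    rcases h r (Submodule.span R {m}) hspan with h1 | h2
    · exact Or.inr (h1 m (Submodule.mem_span_singleton_self m))
    · exact Or.inl h2
end

section
/- If N is a (k,n)-closed submodule of an R-module M, then the colon ideal (N :ᵣ M) is a (k,n)-closed ideal of R, i.e., for all r ∈ R, r^k ∈ (N :ᵣ M) implies r^n ∈ (N :ᵣ M). -/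
/-- If N is a (k,n)-closed submodule of M, then (N :ᵣ M) is a
(k,n)-closed ideal of R. -/
theorem stmt_1 {R M : Type*} [CommRing R] [Nontrivial R] [AddCommGroup M] [Module R M]
    (k n : ℕ) (hk : 0 < k) (hn : 0 < n) (N : Submodule R M) (hN : N ≠ ⊤)
    (hclosed : ∀ (r : R) (m : M), r ^ k • m ∈ N →
        (∀ x : M, r ^ n • x ∈ N) ∨ r ^ (n - 1) • m ∈ N) :
    ∀ r : R, (∀ x : M, r ^ k • x ∈ N) → (∀ x : M, r ^ n • x ∈ N) := by
  intro r h x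
  rcases hclosed r (r • x) (h (r • x)) with h1 | h2
  · exact h1 x
  · rwa [smul_smul, ← pow_succ, Nat.sub_add_cancel hn] at h2
end

section
/- The submodule 6ℤ of the ℤ-module ℤ satisfies that (6ℤ :ℤ ℤ) = 6ℤ is a (2,1)-closed ideal of ℤ, but 6ℤ is not a (2,1)-closed submodule of ℤ (witnessed by 2^2 · 3^2 ∈ 6ℤ while 2 ∉ 6ℤ and 3^2 ∉ 6ℤ). -/
lemma mem6 (x : ℤ) : x ∈ Ideal.span ({6} : Set ℤ) ↔ (6 : ℤ) ∣ x := by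
  simp [Ideal.mem_span_singleton]

/-- 6ℤ as a submodule of the ℤ-module ℤ: (6ℤ :ℤ ℤ) = 6ℤ is a (2,1)-closed
ideal of ℤ, but 6ℤ is not a (2,1)-closed submodule of ℤ. -/
theorem stmt_2 :
    (∀ x : ℤ, x ^ 2 ∈ Ideal.span ({6} : Set ℤ) → x ∈ Ideal.span ({6} : Set ℤ)) ∧
    ¬ (∀ (r m : ℤ), r ^ 2 • m ∈ Ideal.span ({6} : Set ℤ) →
        (∀ x : ℤ, r • x ∈ Ideal.span ({6} : Set ℤ)) ∨ m ∈ Ideal.span ({6} : Set ℤ)) ∧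
    (2 : ℤ) ^ 2 • (3 : ℤ) ^ 2 ∈ Ideal.span ({6} : Set ℤ) ∧
    ¬ (∀ x : ℤ, (2 : ℤ) • x ∈ Ideal.span ({6} : Set ℤ)) ∧
    (3 : ℤ) ^ 2 ∉ Ideal.span ({6} : Set ℤ) := by
  refine ⟨?_, ?_, ?_, ?_, ?_⟩
  · intro x hx
    rw [mem6] at hx ⊢
    have h2 : (2 : ℤ) ∣ x := by
      have : (2 : ℤ) ∣ x ^ 2 := dvd_trans (by norm_num) hx
      exact (Int.Prime.dvd_pow' (by norm_num) this)
    have h3 : (3 : ℤ) ∣ x := by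
      have : (3 : ℤ) ∣ x ^ 2 := dvd_trans (by norm_num) hx
      exact (Int.Prime.dvd_pow' (by norm_num) this)
    omega
  · intro h
    rcases h 2 9 (by rw [mem6]; norm_num) with h | h
    · have := h 1
      rw [mem6, smul_eq_mul] at this; omega
    · rw [mem6] at h; omega
  · rw [mem6]; norm_num
  · intro h
    have := h 1
    rw [mem6, smul_eq_mul] at this; omega
  · rw [mem6]; norm_num
end

section
/- If N is a (k,n)-closed submodule of an R-module M, then for each m ∈ M \ N the colon ideal (N :ᵣ m) = {r ∈ R : r • m ∈ N} is a (k,n)-closed ideal of R. -/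
/-- If N is a (k,n)-closed submodule of M, then for each m ∈ M \ N
the ideal (N :ᵣ m) is a (k,n)-closed ideal of R. -/
theorem stmt_3 {R M : Type*} [CommRing R] [Nontrivial R] [AddCommGroup M] [Module R M]
    (k n : ℕ) (hk : 0 < k) (hn : 0 < n) (N : Submodule R M) (hN : N ≠ ⊤)
    (hclosed : ∀ (r : R) (m : M), r ^ k • m ∈ N →
        (∀ x : M, r ^ n • x ∈ N) ∨ r ^ (n - 1) • m ∈ N) :
    ∀ m : M, m ∉ N → ∀ r : R, r ^ k • m ∈ N → r ^ n • m ∈ N := by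
  intro m hm r hr
  rcases hclosed r m hr with h | h
  · exact h m
  · have : r ^ n • m = r • r ^ (n - 1) • m := by
      rw [← smul_assoc, smul_eq_mul, ← pow_succ', Nat.sub_add_cancel hn]
    rw [this]
    exact N.smul_mem r h
end

section
/- Let M be a finitely generated R-module generated by m₁, ..., m_t and N a proper submodule of M with k > n. If (N :ᵣ m_i) is a (k,n)-closed ideal of R for all i = 1, ..., t, then (N :ᵣ M) is a (k,n)-closed ideal of R. -/
/-- If M is generated by m₁, ..., m_t, N is a proper submodule, k > n,
and each (N :ᵣ mᵢ) is a (k,n)-closed ideal, then (N :ᵣ M) is a (k,n)-closed ideal. -/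
theorem stmt_5 {R M : Type*} [CommRing R] [Nontrivial R] [AddCommGroup M] [Module R M]
    (k n : ℕ) (hn : 0 < n) (hkn : k > n) (t : ℕ) (m : Fin t → M)
    (hgen : Submodule.span R (Set.range m) = ⊤)
    (N : Submodule R M) (hN : N ≠ ⊤)
    (h : ∀ i : Fin t, ∀ r : R, r ^ k • m i ∈ N → r ^ n • m i ∈ N) :
    ∀ r : R, (∀ x : M, r ^ k • x ∈ N) → (∀ x : M, r ^ n • x ∈ N) := by
  intro r hk x
  have hx : x ∈ Submodule.span R (Set.range m) := by rw [hgen]; trivial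
  induction hx using Submodule.span_induction with
  | mem y hy =>
    obtain ⟨i, rfl⟩ := hy
    exact h i r (hk _)
  | zero => simpa using N.zero_mem
  | add y z _ _ hy hz => rw [smul_add]; exact N.add_mem hy hz
  | smul c y _ hy => rw [smul_comm]; exact N.smul_mem c hy
end

section
/- Let N be a proper submodule of an R-module M with k > n. Then N is a (k,n)-closed submodule of M if and only if for all r ∈ R and m ∈ M, either (N :ᵣ r^k • m) = (N :ᵣ r^(n-1) • m) or r^n ∈ (N :ᵣ M). -/
/-- For k > n, N is (k,n)-closed iff for all r, m either
(N :ᵣ r^k • m) = (N :ᵣ r^(n-1) • m) or r^n ∈ (N :ᵣ M). -/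
theorem stmt_6 {R M : Type*} [CommRing R] [Nontrivial R] [AddCommGroup M] [Module R M]
    (k n : ℕ) (hn : 0 < n) (hkn : k > n) (N : Submodule R M) (hN : N ≠ ⊤) :
    (∀ (r : R) (m : M), r ^ k • m ∈ N →
        (∀ x : M, r ^ n • x ∈ N) ∨ r ^ (n - 1) • m ∈ N) ↔
    (∀ (r : R) (m : M),
        (∀ s : R, s • (r ^ k • m) ∈ N ↔ s • (r ^ (n - 1) • m) ∈ N) ∨
        (∀ x : M, r ^ n • x ∈ N)) := by
  have hsplit : ∀ r : R, r ^ k = r ^ (k - (n - 1)) * r ^ (n - 1) := by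
    intro r
    rw [← pow_add, Nat.sub_add_cancel (le_trans (Nat.sub_le n 1) hkn.le)]
  constructor
  · intro h r m
    by_cases hr : ∀ x : M, r ^ n • x ∈ N
    · exact Or.inr hr
    · left
      intro s
      constructor
      · intro hs
        have : r ^ k • (s • m) ∈ N := by
          rwa [smul_comm] at hs
        rcases h r (s • m) this with h1 | h2
        · exact absurd h1 hr
        · rwa [smul_comm] at h2
      · intro hs
        have : s • r ^ k • m = r ^ (k - (n - 1)) • (s • r ^ (n - 1) • m) := by
          rw [hsplit r, mul_smul]; rw [smul_comm s, smul_comm (r ^ (k - (n - 1)))]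
        rw [this]
        exact N.smul_mem _ hs
  · intro h r m hm
    rcases h r m with h1 | h2
    · right
      have := (h1 1).mp (by simpa using hm)
      simpa using this
    · exact Or.inl h2
end

section
/- If N is a semi n-absorbing submodule of an R-module M and n₁ ≥ n, then N is a semi n₁-absorbing submodule of M. -/
/-- A semi n-absorbing submodule is semi n₁-absorbing for all n₁ ≥ n. -/
theorem stmt_9 {R M : Type*} [CommRing R] [Nontrivial R] [AddCommGroup M] [Module R M]
    (n n₁ : ℕ) (hn : 0 < n) (hnn : n₁ ≥ n) (N : Submodule R M) (hN : N ≠ ⊤)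
    (hsa : ∀ (r : R) (m : M), r ^ n • m ∈ N →
        (∀ x : M, r ^ n • x ∈ N) ∨ r ^ (n - 1) • m ∈ N) :
    ∀ (r : R) (m : M), r ^ n₁ • m ∈ N →
      (∀ x : M, r ^ n₁ • x ∈ N) ∨ r ^ (n₁ - 1) • m ∈ N := by
  intro r m hm
  obtain ⟨k, rfl⟩ := Nat.exists_eq_add_of_le hnn
  have h1 : r ^ n • (r ^ k • m) ∈ N := by
    rw [← mul_smul, ← pow_add]; exact hm
  rcases hsa r (r ^ k • m) h1 with h | h
  · left
    intro x
    have := N.smul_mem (r ^ k) (h x)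
    rwa [← mul_smul, ← pow_add, add_comm] at this
  · right
    rw [← mul_smul, ← pow_add] at h
    have : n - 1 + k = n + k - 1 := by omega
    rwa [this] at h
end

section
/- If N is a quasi-prime submodule of an R-module M, then N is a (k,n)-closed submodule of M for all positive integers k ≥ n ≥ 2. -/
/-- A quasi-prime submodule is (k,n)-closed for all k ≥ n ≥ 2. -/
theorem stmt_10 {R M : Type*} [CommRing R] [Nontrivial R] [AddCommGroup M] [Module R M]
    (N : Submodule R M) (hN : N ≠ ⊤)
    (hqp : ∀ (a b : R) (m : M), (a * b) • m ∈ N → a • m ∈ N ∨ b • m ∈ N) :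
    ∀ (k n : ℕ), k ≥ n → n ≥ 2 →
      ∀ (r : R) (m : M), r ^ k • m ∈ N →
        (∀ x : M, r ^ n • x ∈ N) ∨ r ^ (n - 1) • m ∈ N := by
  have key : ∀ (k : ℕ) (r : R) (m : M), 1 ≤ k → r ^ k • m ∈ N → r • m ∈ N := by
    intro k
    induction k with
    | zero => intro r m h; omega
    | succ j ih =>
      intro r m _ h
      rcases Nat.eq_zero_or_pos j with h1 | hj
      · subst h1; simpa using h
      · 
        rw [pow_succ, mul_comm] at h
        rcases hqp r (r ^ j) m h with h2 | h2
        · exact h2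
        · exact ih r m hj h2
  intro k n hkn hn2 r m hkm
  right
  have hr : r • m ∈ N := key k r m (by omega) hkm
  have : r ^ (n - 1) • m = r ^ (n - 2) • (r • m) := by
    have h2 : n - 2 + 1 = n - 1 := by omega
    rw [smul_smul, ← pow_succ, h2]
  rw [this]
  exact N.smul_mem _ hr
end

section
/- If N is a semi n-absorbing submodule of an R-module M, then N is a (k,n)-closed submodule of M for every positive integer k. -/
/-- A semi n-absorbing submodule is (k,n)-closed for every positive k. -/
theorem stmt_11 {R M : Type*} [CommRing R] [Nontrivial R] [AddCommGroup M] [Module R M]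
    (k n : ℕ) (hk : 0 < k) (hn : 0 < n) (N : Submodule R M) (hN : N ≠ ⊤)
    (hsa : ∀ (r : R) (m : M), r ^ n • m ∈ N →
        (∀ x : M, r ^ n • x ∈ N) ∨ r ^ (n - 1) • m ∈ N) :
    ∀ (r : R) (m : M), r ^ k • m ∈ N →
      (∀ x : M, r ^ n • x ∈ N) ∨ r ^ (n - 1) • m ∈ N := by
  clear hk hN
  intro r m
  induction k using Nat.strong_induction_on generalizing m with
  | _ k ih =>
    intro hkm
    by_cases hkn : k ≤ n
    · apply hsa r m
      have h : r ^ n • m = r ^ (n - k) • (r ^ k • m) := by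
        rw [smul_smul, ← pow_add, Nat.sub_add_cancel hkn]
      rw [h]
      exact N.smul_mem _ hkm
    · push_neg at hkn
      have h1 : r ^ n • (r ^ (k - n) • m) ∈ N := by
        rw [smul_smul, ← pow_add, Nat.add_sub_cancel' hkn.le]
        exact hkm
      rcases hsa r _ h1 with h | h
      · exact Or.inl h
      · apply ih (k - 1) (by omega)
        rw [smul_smul, ← pow_add] at h
        have he : n - 1 + (k - n) = k - 1 := by omega
        rwa [he] at h
end

section
/- Let N be a proper submodule of an R-module M and k > n. Then N is a (k,n)-closed submodule of M if and only if N is a semi n-absorbing submodule of M. -/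
/-- For k > n, N is (k,n)-closed iff N is semi n-absorbing. -/
theorem stmt_12 {R M : Type*} [CommRing R] [Nontrivial R] [AddCommGroup M] [Module R M]
    (k n : ℕ) (hn : 0 < n) (hkn : k > n) (N : Submodule R M) (hN : N ≠ ⊤) :
    (∀ (r : R) (m : M), r ^ k • m ∈ N →
        (∀ x : M, r ^ n • x ∈ N) ∨ r ^ (n - 1) • m ∈ N) ↔
    (∀ (r : R) (m : M), r ^ n • m ∈ N →
        (∀ x : M, r ^ n • x ∈ N) ∨ r ^ (n - 1) • m ∈ N) := by
  constructor
  · intro h r m hm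
    apply h r m
    have : r ^ k • m = r ^ (k - n) • (r ^ n • m) := by
      rw [smul_smul, ← pow_add, Nat.sub_add_cancel hkn.le]
    rw [this]
    exact N.smul_mem _ hm
  · intro h r m
    have key : ∀ j : ℕ, ∀ m : M, r ^ (n + j) • m ∈ N →
        (∀ x : M, r ^ n • x ∈ N) ∨ r ^ (n - 1) • m ∈ N := by
      intro j
      induction j with
      | zero => intro m hm; exact h r m hm
      | succ j ih =>
        intro m hm
        have h1 : r ^ n • (r ^ (j + 1) • m) ∈ N := by
          rw [smul_smul, ← pow_add]
          rwa [show n + (j + 1) = n + j + 1 from rfl] at hm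
        rcases h r _ h1 with h2 | h2
        · exact Or.inl h2
        · apply ih
          have : r ^ (n - 1) • (r ^ (j + 1) • m) = r ^ (n + j) • m := by
            rw [smul_smul, ← pow_add, show n - 1 + (j + 1) = n + j by omega]
          rwa [this] at h2
    intro hm
    apply key (k - n) m
    rwa [Nat.add_sub_cancel' hkn.le]
end

section
/- Let {N_λ}_{λ ∈ Λ} be a nonempty chain (totally ordered by inclusion) of (k,n)-closed submodules of an R-module M. Then ⋂_{λ ∈ Λ} N_λ is a (k,n)-closed submodule of M. -/
/-- The intersection of a nonempty chain of (k,n)-closed submodules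
is a (k,n)-closed submodule. -/
theorem stmt_14 {R M : Type*} [CommRing R] [Nontrivial R] [AddCommGroup M] [Module R M]
    (k n : ℕ) (hk : 0 < k) (hn : 0 < n)
    {ι : Type*} [Nonempty ι] (N : ι → Submodule R M)
    (hchain : ∀ i j, N i ≤ N j ∨ N j ≤ N i)
    (hprop : ∀ i, N i ≠ ⊤)
    (hclosed : ∀ i, ∀ (r : R) (m : M), r ^ k • m ∈ N i →
        (∀ x : M, r ^ n • x ∈ N i) ∨ r ^ (n - 1) • m ∈ N i) :
    (⨅ i, N i) ≠ ⊤ ∧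
    ∀ (r : R) (m : M), r ^ k • m ∈ ⨅ i, N i →
      (∀ x : M, r ^ n • x ∈ ⨅ i, N i) ∨ r ^ (n - 1) • m ∈ ⨅ i, N i := by
  constructor
  · intro h
    obtain ⟨i⟩ := ‹Nonempty ι›
    exact hprop i (top_le_iff.mp (h ▸ iInf_le N i))
  · intro r m hm
    by_contra hcon
    push_neg at hcon
    obtain ⟨h1, h2⟩ := hcon
    simp only [Submodule.mem_iInf, not_forall] at h1 h2
    obtain ⟨x, i, hi⟩ := h1
    obtain ⟨j, hj⟩ := h2
    have hmi : r ^ k • m ∈ N i := (Submodule.mem_iInf N).mp hm i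
    have hmj : r ^ k • m ∈ N j := (Submodule.mem_iInf N).mp hm j
    rcases hchain i j with hle | hle
    · rcases hclosed i r m hmi with h | h
      · exact hi (h x)
      · exact hj (hle h)
    · rcases hclosed j r m hmj with h | h
      · exact hi (hle (h x))
      · exact hj h
end

section
/- In the ℤ-module ℤ with distinct primes p and q, the submodules p^n ℤ and q^n ℤ are semi n-absorbing, but their intersection p^n q^n ℤ is not semi n-absorbing (witnessed by p^n · q^n ∈ p^n q^n ℤ while p^(n-1)·q^n ∉ p^n q^n ℤ and p^n ∉ (p^n q^n ℤ :ℤ ℤ)). -/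
lemma semi_abs (p : ℤ) (hp : Prime p) (n : ℕ) (r m : ℤ)
    (h : p ^ n ∣ r ^ n * m) :
    (∀ x : ℤ, p ^ n ∣ r ^ n * x) ∨ p ^ n ∣ r ^ (n - 1) * m := by
  by_cases hd : p ∣ r
  · exact Or.inl fun x => dvd_mul_of_dvd_left (pow_dvd_pow_of_dvd hd n) x
  · have hc : IsCoprime (p ^ n) (r ^ n) :=
      (((hp.coprime_iff_not_dvd).mpr hd).pow : IsCoprime (p ^ n) (r ^ n))
    have : p ^ n ∣ m := hc.dvd_of_dvd_mul_left h
    exact Or.inr (Dvd.dvd.mul_left this _)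

/-- For distinct primes p, q, the submodules p^nℤ and q^nℤ of the
ℤ-module ℤ are semi n-absorbing, but p^n q^n ℤ is not. -/
theorem stmt_15 (p q : ℤ) (hp : Prime p) (hq : Prime q) (hpq : p ≠ q)
    (n : ℕ) (hn : 0 < n) :
    (∀ (r m : ℤ), r ^ n • m ∈ Ideal.span ({p ^ n} : Set ℤ) →
        (∀ x : ℤ, r ^ n • x ∈ Ideal.span ({p ^ n} : Set ℤ)) ∨
          r ^ (n - 1) • m ∈ Ideal.span ({p ^ n} : Set ℤ)) ∧
    (∀ (r m : ℤ), r ^ n • m ∈ Ideal.span ({q ^ n} : Set ℤ) →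
        (∀ x : ℤ, r ^ n • x ∈ Ideal.span ({q ^ n} : Set ℤ)) ∨
          r ^ (n - 1) • m ∈ Ideal.span ({q ^ n} : Set ℤ)) ∧
    ¬ (∀ (r m : ℤ), r ^ n • m ∈ Ideal.span ({p ^ n * q ^ n} : Set ℤ) →
        (∀ x : ℤ, r ^ n • x ∈ Ideal.span ({p ^ n * q ^ n} : Set ℤ)) ∨
          r ^ (n - 1) • m ∈ Ideal.span ({p ^ n * q ^ n} : Set ℤ)) ∧
    p ^ n • q ^ n ∈ Ideal.span ({p ^ n * q ^ n} : Set ℤ) ∧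
    p ^ (n - 1) • q ^ n ∉ Ideal.span ({p ^ n * q ^ n} : Set ℤ) ∧
    ¬ (∀ x : ℤ, p ^ n • x ∈ Ideal.span ({p ^ n * q ^ n} : Set ℤ)) := by
  simp only [smul_eq_mul, Ideal.mem_span_singleton]
  have hq0 : q ^ n ≠ 0 := pow_ne_zero n hq.ne_zero
  have key1 : ¬ p ^ n * q ^ n ∣ p ^ (n - 1) * q ^ n := by
    intro h
    have h2 : p ^ n ∣ p ^ (n - 1) := (mul_dvd_mul_iff_right hq0).mp h
    have := (pow_dvd_pow_iff hp.ne_zero hp.not_unit).mp h2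
    omega
  have key2 : ¬ ∀ x : ℤ, p ^ n * q ^ n ∣ p ^ n * x := by
    intro h
    have h1 := h 1
    rw [mul_one] at h1
    have : q ^ n ∣ 1 := by
      have hp0 : p ^ n ≠ 0 := pow_ne_zero n hp.ne_zero
      have := (mul_dvd_mul_iff_left hp0).mp (by rw [mul_one]; exact h1 :
        p ^ n * q ^ n ∣ p ^ n * 1)
      exact this
    exact hq.not_unit ((isUnit_pow_iff hn.ne').mp (isUnit_of_dvd_one this))
  refine ⟨fun r m h => semi_abs p hp n r m h,
    fun r m h => semi_abs q hq n r m h, ?_, dvd_refl _, key1, key2⟩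
  intro h
  rcases h p (q ^ n) dvd_rfl with h1 | h1
  · exact key2 h1
  · exact key1 h1
end

section
/- Let N and K be proper submodules of an R-module M such that N is semi n₁-absorbing and K is semi n₂-absorbing, and let n = max{n₁, n₂}. Then N ∩ K is a semi (n+1)-absorbing submodule of M. -/
lemma stmt_16_aux {R M : Type*} [CommRing R] [AddCommGroup M] [Module R M]
    (k n : ℕ) (hk : 0 < k) (hkn : k ≤ n) (N : Submodule R M)
    (h : ∀ (r : R) (m : M), r ^ k • m ∈ N → (∀ x : M, r ^ k • x ∈ N) ∨ r ^ (k - 1) • m ∈ N)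
    (r : R) (m : M) (hm : r ^ (n + 1) • m ∈ N) : r ^ n • m ∈ N := by
  have h1 : r ^ k • (r ^ (n + 1 - k) • m) ∈ N := by
    rw [smul_smul, ← pow_add]
    have : k + (n + 1 - k) = n + 1 := by omega
    rwa [this]
  rcases h r _ h1 with h2 | h2
  · have h3 := h2 (r ^ (n - k) • m)
    rw [smul_smul, ← pow_add] at h3
    have : k + (n - k) = n := by omega
    rwa [this] at h3
  · rw [smul_smul, ← pow_add] at h2
    have : k - 1 + (n + 1 - k) = n := by omega
    rwa [this] at h2

/-- If N is semi n₁-absorbing and K is semi n₂-absorbing and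
n = max n₁ n₂, then N ∩ K is semi (n+1)-absorbing. -/
theorem stmt_16 {R M : Type*} [CommRing R] [Nontrivial R] [AddCommGroup M] [Module R M]
    (n₁ n₂ : ℕ) (hn₁ : 0 < n₁) (hn₂ : 0 < n₂)
    (N K : Submodule R M) (hN : N ≠ ⊤) (hK : K ≠ ⊤)
    (hNsa : ∀ (r : R) (m : M), r ^ n₁ • m ∈ N →
        (∀ x : M, r ^ n₁ • x ∈ N) ∨ r ^ (n₁ - 1) • m ∈ N)
    (hKsa : ∀ (r : R) (m : M), r ^ n₂ • m ∈ K →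
        (∀ x : M, r ^ n₂ • x ∈ K) ∨ r ^ (n₂ - 1) • m ∈ K) :
    ∀ (r : R) (m : M), r ^ (max n₁ n₂ + 1) • m ∈ N ⊓ K →
      (∀ x : M, r ^ (max n₁ n₂ + 1) • x ∈ N ⊓ K) ∨
        r ^ (max n₁ n₂ + 1 - 1) • m ∈ N ⊓ K := by
  intro r m hm
  right
  simp only [Nat.add_sub_cancel]
  exact ⟨stmt_16_aux n₁ (max n₁ n₂) hn₁ (le_max_left _ _) N hNsa r m hm.1,
         stmt_16_aux n₂ (max n₁ n₂) hn₂ (le_max_right _ _) K hKsa r m hm.2⟩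
end

section
/- Let R be a valuation domain with quotient field K, M an R-module, and N a proper submodule of M. If N is a semi n-absorbing submodule of M and r ∈ K, m ∈ M are such that r^(n+1) • m ∈ N (where the action makes sense), then r^n • m ∈ N. -/
/-- Over a valuation domain R with fraction field K, if N is a semi
n-absorbing R-submodule of a K-module M, r ∈ K and m ∈ M with r^(n+1) • m ∈ N,
then r^n • m ∈ N. -/
theorem stmt_17 {R : Type*} [CommRing R] [IsDomain R] [ValuationRing R]
    {M : Type*} [AddCommGroup M] [Module (FractionRing R) M] [Module R M]
    [IsScalarTower R (FractionRing R) M]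
    (n : ℕ) (hn : 0 < n) (N : Submodule R M) (hN : N ≠ ⊤)
    (hsa : ∀ (s : R) (m : M), s ^ n • m ∈ N →
        (∀ x : M, s ^ n • x ∈ N) ∨ s ^ (n - 1) • m ∈ N) :
    ∀ (r : FractionRing R) (m : M), r ^ (n + 1) • m ∈ N → r ^ n • m ∈ N := by
  intro r m hrm
  rcases eq_or_ne r 0 with rfl | hr0
  · rw [zero_pow hn.ne', zero_smul]; exact N.zero_mem
  rcases ValuationRing.isInteger_or_isInteger R r with ⟨s, hs⟩ | ⟨t, ht⟩
  · -- r = algebraMap s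
    have key : s ^ n • (s • m) ∈ N := by
      have : (s ^ n * s) • m = r ^ (n + 1) • m := by
        rw [← IsScalarTower.algebraMap_smul (FractionRing R) (s ^ n * s) m,
          map_mul, map_pow, hs, pow_succ]
      rw [smul_smul, this]
      exact hrm
    have goal_eq : r ^ n • m = s ^ n • m := by
      rw [← IsScalarTower.algebraMap_smul (FractionRing R) (s ^ n) m, map_pow, hs]
    rcases hsa s (s • m) key with h | h
    · rw [goal_eq]; exact h m
    · rw [goal_eq, show s ^ n = s ^ (n - 1) * s by
        rw [← pow_succ, Nat.sub_add_cancel hn], mul_smul]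
      exact h
  · -- r⁻¹ = algebraMap t
    have : r ^ n • m = t • (r ^ (n + 1) • m) := by
      rw [← IsScalarTower.algebraMap_smul (FractionRing R) t, smul_smul, ht,
        pow_succ]
      field_simp
    rw [this]
    exact N.smul_mem t hrm
end

section
/- Let R be a principal ideal domain and N a proper submodule of an R-module M. Then N is a (k,n)-closed submodule of M if and only if N is a strongly (k,n)-closed submodule of M, i.e., for every ideal I of R and submodule L of M, I^k • L ⊆ N implies I^n ⊆ (N :ᵣ M) or I^(n-1) • L ⊆ N. -/
/-- Over a PID, a proper submodule N is (k,n)-closed iff it is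
strongly (k,n)-closed. -/
theorem stmt_18 {R M : Type*} [CommRing R] [IsDomain R] [IsPrincipalIdealRing R]
    [AddCommGroup M] [Module R M]
    (k n : ℕ) (hk : 0 < k) (hn : 0 < n) (N : Submodule R M) (hN : N ≠ ⊤) :
    (∀ (r : R) (m : M), r ^ k • m ∈ N →
        (∀ x : M, r ^ n • x ∈ N) ∨ r ^ (n - 1) • m ∈ N) ↔
    (∀ (I : Ideal R) (L : Submodule R M), I ^ k • L ≤ N →
        (∀ s ∈ I ^ n, ∀ x : M, s • x ∈ N) ∨ I ^ (n - 1) • L ≤ N) := by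
  constructor
  · intro hw I L hIL
    obtain ⟨r, hr⟩ := (IsPrincipalIdealRing.principal I).principal
    have hpow : ∀ j : ℕ, I ^ j = Ideal.span {r ^ j} := by
      intro j
      rw [hr]
      exact Ideal.span_singleton_pow r j
    have hmem : ∀ m ∈ L, r ^ k • m ∈ N := by
      intro m hm
      apply hIL
      exact Submodule.smul_mem_smul (by rw [hpow k]; exact Ideal.subset_span rfl) hm
    by_cases hall : ∀ x : M, r ^ n • x ∈ N
    · left
      intro s hs x
      rw [hpow n, Ideal.mem_span_singleton] at hs
      obtain ⟨c, rfl⟩ := hs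
      rw [mul_comm, mul_smul]
      exact N.smul_mem c (hall x)
    · right
      rw [hpow (n - 1)]
      rw [Submodule.smul_le]
      intro s hs m hm
      rw [Ideal.mem_span_singleton] at hs
      obtain ⟨c, rfl⟩ := hs
      rcases hw r m (hmem m hm) with h | h
      · exact absurd h hall
      · rw [mul_comm, mul_smul]
        exact N.smul_mem c h
  · intro hs r m hrm
    have hIL : (Ideal.span {r}) ^ k • (Submodule.span R {m}) ≤ N := by
      rw [Ideal.span_singleton_pow, Submodule.smul_le]
      intro s hsmem y hy
      rw [Ideal.mem_span_singleton] at hsmem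
      obtain ⟨c, rfl⟩ := hsmem
      rw [Submodule.mem_span_singleton] at hy
      obtain ⟨d, rfl⟩ := hy
      rw [smul_smul]
      have he : r ^ k * c * d = (c * d) * r ^ k := by ring
      rw [he, mul_smul]
      exact N.smul_mem _ hrm
    rcases hs (Ideal.span {r}) (Submodule.span R {m}) hIL with h | h
    · left
      intro x
      exact h (r ^ n) (by rw [Ideal.span_singleton_pow]; exact Ideal.subset_span rfl) x
    · right
      apply h
      exact Submodule.smul_mem_smul
        (by rw [Ideal.span_singleton_pow]; exact Ideal.subset_span rfl)
        (Submodule.mem_span_singleton_self m)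
end

section
/- Let N be a (k,2)-closed submodule of an R-module M in which 2 is a unit. If I is an ideal of R with I^k • M ⊆ N, then I^2 ⊆ (N :ᵣ M); consequently N is a strongly (k,2)-closed submodule of M. -/
/-- If 2 is a unit in R and N is a (k,2)-closed submodule of M,
then I^k • M ⊆ N implies I^2 ⊆ (N :ᵣ M), and N is strongly (k,2)-closed. -/
theorem stmt_19 {R M : Type*} [CommRing R] [Nontrivial R] [AddCommGroup M] [Module R M]
    (h2 : IsUnit (2 : R)) (k : ℕ) (hk : 0 < k) (N : Submodule R M) (hN : N ≠ ⊤)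
    (hclosed : ∀ (r : R) (m : M), r ^ k • m ∈ N →
        (∀ x : M, r ^ 2 • x ∈ N) ∨ r • m ∈ N) :
    (∀ I : Ideal R, I ^ k • (⊤ : Submodule R M) ≤ N →
        ∀ s ∈ I ^ 2, ∀ x : M, s • x ∈ N) ∧
    (∀ (I : Ideal R) (L : Submodule R M), I ^ k • L ≤ N →
        (∀ s ∈ I ^ 2, ∀ x : M, s • x ∈ N) ∨ I • L ≤ N) := by
  obtain ⟨c, hc⟩ := h2.exists_right_inv
  -- If every element of I has square in (N : M), then I^2 ⊆ (N : M).
  have sq_of : ∀ (I : Ideal R), (∀ a ∈ I, ∀ x : M, a ^ 2 • x ∈ N) →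
      ∀ s ∈ I ^ 2, ∀ x : M, s • x ∈ N := by
    intro I hsq s hs
    rw [pow_two] at hs
    refine Submodule.mul_induction_on hs ?_ ?_
    · intro a ha b hb x
      have key : a * b = c * ((a + b) ^ 2 - a ^ 2 - b ^ 2) := by
        linear_combination (-(a * b)) * hc
      rw [key, mul_smul, sub_smul, sub_smul]
      exact N.smul_mem c (N.sub_mem (N.sub_mem (hsq _ (I.add_mem ha hb) x)
        (hsq _ ha x)) (hsq _ hb x))
    · intro s t hs ht x
      rw [add_smul]
      exact N.add_mem (hs x) (ht x)
  -- the main step: I^k • L ≤ N and I • L ⊄ N implies every a ∈ I has a^2 ∈ (N:M)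
  have main : ∀ (I : Ideal R) (L : Submodule R M), I ^ k • L ≤ N →
      (∀ s ∈ I ^ 2, ∀ x : M, s • x ∈ N) ∨ I • L ≤ N := by
    intro I L hIL
    by_cases hp : ∀ a ∈ I, ∀ m ∈ L, a • m ∈ N
    · exact Or.inr (Submodule.smul_le.2 hp)
    · push_neg at hp
      obtain ⟨a₀, ha₀I, m₀, hm₀L, ha₀m₀⟩ := hp
      have hpowmem : ∀ a ∈ I, a ^ k • m₀ ∈ N := fun a haI =>
        hIL (Submodule.smul_mem_smul (Ideal.pow_mem_pow haI k) hm₀L)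
      have ha₀sq : ∀ x : M, a₀ ^ 2 • x ∈ N :=
        (hclosed a₀ m₀ (hpowmem a₀ ha₀I)).resolve_right ha₀m₀
      left
      refine sq_of I ?_
      intro a haI
      by_cases ham : a • m₀ ∈ N
      · have h₁ : ∀ x : M, (a + a₀) ^ 2 • x ∈ N := by
          refine (hclosed (a + a₀) m₀ (hpowmem _ (I.add_mem haI ha₀I))).resolve_right ?_
          intro h
          apply ha₀m₀
          have : a₀ • m₀ = (a + a₀) • m₀ - a • m₀ := by rw [add_smul]; abel
          rw [this]; exact N.sub_mem h ham
        have h₂ : ∀ x : M, (a - a₀) ^ 2 • x ∈ N := by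
          refine (hclosed (a - a₀) m₀ (hpowmem _ (I.sub_mem haI ha₀I))).resolve_right ?_
          intro h
          apply ha₀m₀
          have : a₀ • m₀ = a • m₀ - (a - a₀) • m₀ := by rw [sub_smul]; abel
          rw [this]; exact N.sub_mem ham h
        intro x
        have key : a ^ 2 = c * (a + a₀) ^ 2 + c * (a - a₀) ^ 2 - a₀ ^ 2 := by
          linear_combination (-(a ^ 2 + a₀ ^ 2)) * hc
        rw [key, sub_smul, add_smul, mul_smul, mul_smul]
        exact N.sub_mem (N.add_mem (N.smul_mem c (h₁ x)) (N.smul_mem c (h₂ x))) (ha₀sq x)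
      · exact (hclosed a m₀ (hpowmem a haI)).resolve_right ham
  refine ⟨?_, main⟩
  intro I hI
  refine sq_of I ?_
  intro a haI x
  have hax : a ^ k • x ∈ N := hI (Submodule.smul_mem_smul (Ideal.pow_mem_pow haI k) trivial)
  rcases hclosed a x hax with h | h
  · exact h x
  · rw [pow_two, mul_smul]
    exact N.smul_mem a h
end
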